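/- In a series-parallel dag with the DePa labeling, for every vertex v and every prefix p of the fork-path f(v), there exists a vertex c with f(c) = p and d(c) ≤ d(v) such that c ≼ v. -/

import Mathlib

/-- Series-parallel dag shapes: a single vertex, serial composition
(identifying the sink of `g1` with the source of `g2`), or parallel
composition (fresh source with edges to the sources of `g1`, `g2`, and a
fresh sink with edges from their sinks). -/
inductive SP : Type where
  | vert : SP
  | seq : SP → SP → SP
  | par : SP → SP → SP

/-- Non-source vertices of a series-parallel dag. -/
def NV : SP → Type
  | .vert => Empty
  | .seq g1 g2 => NV g1 ⊕ NV g2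
  | .par g1 g2 => ((Unit ⊕ NV g1) ⊕ (Unit ⊕ NV g2)) ⊕ Unit

/-- Vertices: the source, or a non-source vertex. -/
abbrev V (g : SP) : Type := Unit ⊕ NV g

/-- The (unique) source of a series-parallel dag. -/
def src (g : SP) : V g := Sum.inl ()

/-- Embedding of the first component of a serial composition. -/
def emb1 (g1 g2 : SP) : V g1 → V (.seq g1 g2)
  | .inl _ => Sum.inl ()
  | .inr n => Sum.inr (Sum.inl n)

/-- The (unique) sink of a series-parallel dag. -/
def snk : (g : SP) → V g
  | .vert => Sum.inl ()
  | .seq g1 g2 =>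
    match snk g2 with
    | .inl _ => emb1 g1 g2 (snk g1)
    | .inr n => Sum.inr (Sum.inr n)
  | .par _ _ => Sum.inr (Sum.inr ())

/-- Embedding of the second component of a serial composition:
the source of `g2` is identified with the sink of `g1`. -/
def emb2 (g1 g2 : SP) : V g2 → V (.seq g1 g2)
  | .inl _ => emb1 g1 g2 (snk g1)
  | .inr n => Sum.inr (Sum.inr n)

/-- Embedding of the left branch of a parallel composition. -/
def embL (g1 g2 : SP) (v : V g1) : V (.par g1 g2) := Sum.inr (Sum.inl (Sum.inl v))

/-- Embedding of the right branch of a parallel composition. -/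
def embR (g1 g2 : SP) (v : V g2) : V (.par g1 g2) := Sum.inr (Sum.inl (Sum.inr v))

/-- Edges of a series-parallel dag. -/
def Edge : (g : SP) → V g → V g → Prop
  | .vert, _, _ => False
  | .seq g1 g2, u, v =>
      (∃ a b, Edge g1 a b ∧ u = emb1 g1 g2 a ∧ v = emb1 g1 g2 b) ∨
      (∃ a b, Edge g2 a b ∧ u = emb2 g1 g2 a ∧ v = emb2 g1 g2 b)
  | .par g1 g2, u, v =>
      (∃ a b, Edge g1 a b ∧ u = embL g1 g2 a ∧ v = embL g1 g2 b) ∨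
      (∃ a b, Edge g2 a b ∧ u = embR g1 g2 a ∧ v = embR g1 g2 b) ∨
      (u = src (.par g1 g2) ∧ v = embL g1 g2 (src g1)) ∨
      (u = src (.par g1 g2) ∧ v = embR g1 g2 (src g2)) ∨
      (u = embL g1 g2 (snk g1) ∧ v = snk (.par g1 g2)) ∨
      (u = embR g1 g2 (snk g2) ∧ v = snk (.par g1 g2))

/-- `Reach g u v` (`u ≼ v`): there is a directed path (possibly empty) from `u` to `v`. -/
def Reach (g : SP) : V g → V g → Prop := Relation.ReflTransGen (Edge g)

/-- The dag-depth of a vertex (the length of a longest path ending at it),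
computed by the DePa rules: the source has depth 0; at a fork both children
have depth one greater; at a join the new vertex has depth
`1 + max` of the depths of the joining vertices. -/
def depth : (g : SP) → V g → ℕ
  | .vert, _ => 0
  | .seq _ _, .inl _ => 0
  | .seq g1 _, .inr (.inl n) => depth g1 (Sum.inr n)
  | .seq g1 g2, .inr (.inr n) => depth g1 (snk g1) + depth g2 (Sum.inr n)
  | .par _ _, .inl _ => 0
  | .par g1 _, .inr (.inl (.inl v)) => 1 + depth g1 v
  | .par _ g2, .inr (.inl (.inr v)) => 1 + depth g2 v
  | .par g1 g2, .inr (.inr _) => 1 + max (1 + depth g1 (snk g1)) (1 + depth g2 (snk g2))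

/-- The fork-path of a vertex, as a list of bits (`false` = L, `true` = R),
outermost fork first: the root has the empty path, a fork extends the path by
L and R for the two branches, and a join restores the common prefix. -/
def fpath : (g : SP) → V g → List Bool
  | .vert, _ => []
  | .seq _ _, .inl _ => []
  | .seq g1 _, .inr (.inl n) => fpath g1 (Sum.inr n)
  | .seq _ g2, .inr (.inr n) => fpath g2 (Sum.inr n)
  | .par _ _, .inl _ => []
  | .par g1 _, .inr (.inl (.inl v)) => false :: fpath g1 v
  | .par _ g2, .inr (.inl (.inr v)) => true :: fpath g2 v
  | .par _ _, .inr (.inr _) => []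

/-- Longest common prefix of two lists. -/
def lcp : List Bool → List Bool → List Bool
  | a :: as, b :: bs => if a = b then a :: lcp as bs else []
  | _, _ => []

lemma fpath_src (g : SP) : fpath g (src g) = [] := by cases g <;> rfl

lemma depth_src (g : SP) : depth g (src g) = 0 := by cases g <;> rfl

lemma fpath_emb1 (g1 g2 : SP) (w : V g1) :
    fpath (.seq g1 g2) (emb1 g1 g2 w) = fpath g1 w := by
  cases w with
  | inl u => exact (fpath_src g1).symm
  | inr n => rfl

lemma depth_emb1 (g1 g2 : SP) (w : V g1) :
    depth (.seq g1 g2) (emb1 g1 g2 w) = depth g1 w := by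
  cases w with
  | inl u => exact (depth_src g1).symm
  | inr n => rfl

lemma fpath_snk (g : SP) : fpath g (snk g) = [] := by
  induction g with
  | vert => rfl
  | seq g1 g2 ih1 ih2 =>
    show fpath (.seq g1 g2) (snk (.seq g1 g2)) = []
    unfold snk
    cases h : snk g2 with
    | inl u =>
      rw [fpath_emb1, ih1]
    | inr n =>
      show fpath g2 (Sum.inr n) = []
      rw [← h, ih2]
  | par g1 g2 ih1 ih2 => rfl

lemma fpath_emb2 (g1 g2 : SP) (w : V g2) :
    fpath (.seq g1 g2) (emb2 g1 g2 w) = fpath g2 w := by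
  cases w with
  | inl u =>
    show fpath (.seq g1 g2) (emb1 g1 g2 (snk g1)) = fpath g2 (src g2)
    rw [fpath_emb1, fpath_snk, fpath_src]
  | inr n => rfl

lemma depth_emb2 (g1 g2 : SP) (w : V g2) :
    depth (.seq g1 g2) (emb2 g1 g2 w) = depth g1 (snk g1) + depth g2 w := by
  cases w with
  | inl u =>
    show depth (.seq g1 g2) (emb1 g1 g2 (snk g1)) = depth g1 (snk g1) + depth g2 (src g2)
    rw [depth_emb1, depth_src]; omega
  | inr n => rfl

lemma edge_emb1 {g1 g2 : SP} {a b : V g1} (h : Edge g1 a b) :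
    Edge (.seq g1 g2) (emb1 g1 g2 a) (emb1 g1 g2 b) :=
  Or.inl ⟨a, b, h, rfl, rfl⟩

lemma edge_emb2 {g1 g2 : SP} {a b : V g2} (h : Edge g2 a b) :
    Edge (.seq g1 g2) (emb2 g1 g2 a) (emb2 g1 g2 b) :=
  Or.inr ⟨a, b, h, rfl, rfl⟩

lemma edge_embL {g1 g2 : SP} {a b : V g1} (h : Edge g1 a b) :
    Edge (.par g1 g2) (embL g1 g2 a) (embL g1 g2 b) :=
  Or.inl ⟨a, b, h, rfl, rfl⟩

lemma edge_embR {g1 g2 : SP} {a b : V g2} (h : Edge g2 a b) :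
    Edge (.par g1 g2) (embR g1 g2 a) (embR g1 g2 b) :=
  Or.inr (Or.inl ⟨a, b, h, rfl, rfl⟩)

lemma reach_emb1 {g1 g2 : SP} {a b : V g1} (h : Reach g1 a b) :
    Reach (.seq g1 g2) (emb1 g1 g2 a) (emb1 g1 g2 b) :=
  Relation.ReflTransGen.lift (emb1 g1 g2) (fun _ _ => edge_emb1) _ _ h

lemma reach_emb2 {g1 g2 : SP} {a b : V g2} (h : Reach g2 a b) :
    Reach (.seq g1 g2) (emb2 g1 g2 a) (emb2 g1 g2 b) :=
  Relation.ReflTransGen.lift (emb2 g1 g2) (fun _ _ => edge_emb2) _ _ h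

lemma reach_embL {g1 g2 : SP} {a b : V g1} (h : Reach g1 a b) :
    Reach (.par g1 g2) (embL g1 g2 a) (embL g1 g2 b) :=
  Relation.ReflTransGen.lift (embL g1 g2) (fun _ _ => edge_embL) _ _ h

lemma reach_embR {g1 g2 : SP} {a b : V g2} (h : Reach g2 a b) :
    Reach (.par g1 g2) (embR g1 g2 a) (embR g1 g2 b) :=
  Relation.ReflTransGen.lift (embR g1 g2) (fun _ _ => edge_embR) _ _ h

lemma reach_src (g : SP) (v : V g) : Reach g (src g) v := by
  induction g with
  | vert =>
    cases v with
    | inl u => exact Relation.ReflTransGen.refl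
    | inr n => exact n.elim
  | seq g1 g2 ih1 ih2 =>
    cases v with
    | inl u => exact Relation.ReflTransGen.refl
    | inr n =>
      cases n with
      | inl n => exact reach_emb1 (ih1 (Sum.inr n))
      | inr n =>
        have h1 : Reach (.seq g1 g2) (src _) (emb1 g1 g2 (snk g1)) :=
          reach_emb1 (ih1 (snk g1))
        have h2 : Reach (.seq g1 g2) (emb2 g1 g2 (src g2)) (emb2 g1 g2 (Sum.inr n)) :=
          reach_emb2 (ih2 (Sum.inr n))
        exact h1.trans h2
  | par g1 g2 ih1 ih2 =>
    cases v with
    | inl u => exact Relation.ReflTransGen.refl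
    | inr n =>
      have hL : Edge (.par g1 g2) (src _) (embL g1 g2 (src g1)) :=
        Or.inr (Or.inr (Or.inl ⟨rfl, rfl⟩))
      have hR : Edge (.par g1 g2) (src _) (embR g1 g2 (src g2)) :=
        Or.inr (Or.inr (Or.inr (Or.inl ⟨rfl, rfl⟩)))
      match n with
      | .inl (.inl w) => exact Relation.ReflTransGen.head hL (reach_embL (ih1 w))
      | .inl (.inr w) => exact Relation.ReflTransGen.head hR (reach_embR (ih2 w))
      | .inr () =>
        have h1 : Reach (.par g1 g2) (src _) (embL g1 g2 (snk g1)) :=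
          Relation.ReflTransGen.head hL (reach_embL (ih1 (snk g1)))
        have h2 : Edge (.par g1 g2) (embL g1 g2 (snk g1)) (snk (.par g1 g2)) :=
          Or.inr (Or.inr (Or.inr (Or.inr (Or.inl ⟨rfl, rfl⟩))))
        exact h1.tail h2

/-- for every vertex `v` and every prefix `p` of `f(v)`, there is
a vertex `c` with `f(c) = p`, `d(c) ≤ d(v)`, and `c ≼ v`. -/
theorem exists_ancestor_with_prefix (g : SP) (v : V g) (p : List Bool)
    (hp : p <+: fpath g v) :
    ∃ c : V g, fpath g c = p ∧ depth g c ≤ depth g v ∧ Reach g c v := by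
  induction g generalizing p with
  | vert =>
    refine ⟨v, ?_, le_refl _, Relation.ReflTransGen.refl⟩
    cases v with
    | inl u => simpa [fpath] using (List.prefix_nil.mp hp).symm
    | inr n => exact n.elim
  | seq g1 g2 ih1 ih2 =>
    cases v with
    | inl u =>
      refine ⟨Sum.inl u, ?_, le_refl _, Relation.ReflTransGen.refl⟩
      simpa [fpath] using (List.prefix_nil.mp hp).symm
    | inr n =>
      cases n with
      | inl n =>
        obtain ⟨c, hc1, hc2, hc3⟩ := ih1 (Sum.inr n) p hp
        refine ⟨emb1 g1 g2 c, ?_, ?_, reach_emb1 hc3⟩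
        · rw [fpath_emb1]; exact hc1
        · rw [depth_emb1]; exact hc2
      | inr n =>
        obtain ⟨c, hc1, hc2, hc3⟩ := ih2 (Sum.inr n) p hp
        refine ⟨emb2 g1 g2 c, ?_, ?_, reach_emb2 hc3⟩
        · rw [fpath_emb2]; exact hc1
        · show depth (.seq g1 g2) (emb2 g1 g2 c) ≤ depth g1 (snk g1) + depth g2 (Sum.inr n)
          rw [depth_emb2]
          exact Nat.add_le_add_left hc2 _
  | par g1 g2 ih1 ih2 =>
    cases v with
    | inl u =>
      refine ⟨Sum.inl u, ?_, le_refl _, Relation.ReflTransGen.refl⟩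
      simpa [fpath] using (List.prefix_nil.mp hp).symm
    | inr n =>
      match n with
      | .inr () =>
        refine ⟨Sum.inr (Sum.inr ()), ?_, le_refl _, Relation.ReflTransGen.refl⟩
        simpa [fpath] using (List.prefix_nil.mp hp).symm
      | .inl (.inl w) =>
        cases p with
        | nil =>
          exact ⟨src _, fpath_src _, by rw [depth_src]; exact Nat.zero_le _, reach_src _ _⟩
        | cons b q =>
          have hb : b :: q <+: false :: fpath g1 w := hp
          obtain ⟨hb1, hb2⟩ := List.cons_prefix_cons.mp hb
          obtain ⟨c, hc1, hc2, hc3⟩ := ih1 w q hb2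
          refine ⟨embL g1 g2 c, ?_, ?_, reach_embL hc3⟩
          · show false :: fpath g1 c = b :: q
            rw [hc1]; cases hb1; rfl
          · show 1 + depth g1 c ≤ 1 + depth g1 w
            exact Nat.add_le_add_left hc2 _
      | .inl (.inr w) =>
        cases p with
        | nil =>
          exact ⟨src _, fpath_src _, by rw [depth_src]; exact Nat.zero_le _, reach_src _ _⟩
        | cons b q =>
          have hb : b :: q <+: true :: fpath g2 w := hp
          obtain ⟨hb1, hb2⟩ := List.cons_prefix_cons.mp hb
          obtain ⟨c, hc1, hc2, hc3⟩ := ih2 w q hb2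
          refine ⟨embR g1 g2 c, ?_, ?_, reach_embR hc3⟩
          · show true :: fpath g2 c = b :: q
            rw [hc1]; cases hb1; rfl
          · show 1 + depth g2 c ≤ 1 + depth g2 w
            exact Nat.add_le_add_left hc2 _
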